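/- A series of real numbers is permutably convergent if and only if it is weak-permutably convergent. (Classical equivalence.) -/

import Mathlib

def SeriesConvTo (a : ℕ → ℝ) (s : ℝ) : Prop :=
  Filter.Tendsto (fun n => ∑ i ∈ Finset.range n, a i) Filter.atTop (nhds s)

def BracketConvTo (c : ℕ → ℝ) (f : ℕ → ℕ) (t : ℝ) : Prop :=
  StrictMono f ∧ f 0 = 0 ∧
    Filter.Tendsto (fun K => ∑ i ∈ Finset.range (f K), c i) Filter.atTop (nhds t)

open Filter Finset

open scoped Classical in
/-- Reindex a sum over the `p`-elements of `range n` by their `count` index. -/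
lemma sum_filter_count_eq {p : ℕ → Prop} [DecidablePred p] (hp : (setOf p).Infinite)
    (F : ℕ → ℝ) (n : ℕ) :
    ∑ i ∈ (Finset.range n).filter p, F (Nat.count p i)
      = ∑ j ∈ Finset.range (Nat.count p n), F j := by
  refine Finset.sum_nbij' (fun i => Nat.count p i) (fun j => Nat.nth p j) ?_ ?_ ?_ ?_ ?_
  · intro i hi
    simp only [Finset.mem_filter, Finset.mem_range] at hi ⊢
    exact Nat.count_strict_mono hi.2 hi.1
  · intro j hj
    simp only [Finset.mem_range] at hj
    simp only [Finset.mem_filter, Finset.mem_range]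
    exact ⟨Nat.nth_lt_of_lt_count hj, Nat.nth_mem_of_infinite hp j⟩
  · intro i hi
    simp only [Finset.mem_filter] at hi
    exact Nat.nth_count hi.2
  · intro j _
    exact Nat.count_nth_of_infinite hp j
  · intro i _
    rfl

open scoped Classical in
lemma count_add_count_not (p : ℕ → Prop) [DecidablePred p] (n : ℕ) :
    Nat.count p n + Nat.count (fun i => ¬ p i) n = n := by
  induction n with
  | zero => simp
  | succ n ih => by_cases h : p n <;> simp [Nat.count_succ, h] <;> omega

open scoped Classical in
/-- If the partial sums of `a` converge but the positive part of `a` is not summable,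
then some rearrangement of `a` has partial sums tending to `+∞`. -/
lemma key_perm (a : ℕ → ℝ) (hconv : ∃ s, SeriesConvTo a s)
    (hpos : ¬ Summable (fun n => max (a n) 0)) :
    ∃ σ : Equiv.Perm ℕ,
      Filter.Tendsto (fun n => ∑ i ∈ Finset.range n, a (σ i)) Filter.atTop Filter.atTop := by
  obtain ⟨s, hs⟩ := hconv
  set P : ℕ → Prop := fun n => 0 ≤ a n with hP_def
  set Nn : ℕ → Prop := fun n => a n < 0 with hNn_def
  -- P is infinite
  have hP : (setOf P).Infinite := by
    by_contra hfin
    rw [Set.not_infinite] at hfin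
    apply hpos
    apply summable_of_ne_finset_zero (s := hfin.toFinset)
    intro n hn
    simp only [Set.Finite.mem_toFinset, Set.mem_setOf_eq, hP_def, not_le] at hn
    exact max_eq_right (not_le.mp (show ¬ 0 ≤ a n from hn)).le
  -- Nn is infinite
  have hN : (setOf Nn).Infinite := by
    by_contra hfin
    rw [Set.not_infinite] at hfin
    apply hpos
    -- max (a n) 0 = a n + g n with g of finite support
    have hg : Summable (fun n => max (a n) 0 - a n) := by
      apply summable_of_ne_finset_zero (s := hfin.toFinset)
      intro n hn
      simp only [Set.Finite.mem_toFinset, Set.mem_setOf_eq, hNn_def, not_lt] at hn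
      rw [max_eq_left (not_lt.mp (show ¬ a n < 0 from hn))]; ring
    have hgs := hg.hasSum.tendsto_sum_nat
    have htend : Tendsto (fun n => ∑ i ∈ Finset.range n, max (a i) 0) atTop
        (nhds ((∑' n, (max (a n) 0 - a n)) + s)) := by
      have := hgs.add hs
      refine this.congr (fun n => ?_)
      rw [← Finset.sum_add_distrib]
      exact Finset.sum_congr rfl (fun i _ => by ring)
    have hmono : Monotone (fun n => ∑ i ∈ Finset.range n, max (a i) 0) := by
      apply monotone_nat_of_le_succ
      intro n
      rw [Finset.sum_range_succ]
      have : (0:ℝ) ≤ max (a n) 0 := le_max_right _ _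
      linarith
    exact summable_of_sum_range_le (fun n => le_max_right _ _)
      (fun n => hmono.ge_of_tendsto htend n)
  -- positive partial sums
  set Spos : ℕ → ℝ := fun m => ∑ j ∈ Finset.range m, a (Nat.nth P j) with hSpos_def
  have hSpos_mono : Monotone Spos := by
    apply monotone_nat_of_le_succ
    intro n
    rw [hSpos_def]
    simp only [Finset.sum_range_succ]
    have : 0 ≤ a (Nat.nth P n) := Nat.nth_mem_of_infinite hP n
    linarith
  have hplus : Tendsto (fun M => ∑ i ∈ Finset.range M, max (a i) 0) atTop atTop :=
    (not_summable_iff_tendsto_nat_atTop_of_nonneg (fun n => le_max_right _ _)).mp hpos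
  have hplus_eq : ∀ M, ∑ i ∈ Finset.range M, max (a i) 0 = Spos (Nat.count P M) := by
    intro M
    have h1 : ∑ i ∈ Finset.range M, max (a i) 0
        = ∑ i ∈ (Finset.range M).filter P, a i := by
      rw [Finset.sum_filter]
      refine Finset.sum_congr rfl (fun i _ => ?_)
      by_cases h : P i
      · rw [if_pos h]; exact max_eq_left h
      · rw [if_neg h]
        simp only [hP_def, not_le] at h
        exact max_eq_right h.le
    have h2 : ∑ i ∈ (Finset.range M).filter P, a i
        = ∑ i ∈ (Finset.range M).filter P, (fun c => a (Nat.nth P c)) (Nat.count P i) := by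
      refine Finset.sum_congr rfl (fun i hi => ?_)
      simp only [Finset.mem_filter] at hi
      exact (congrArg a (Nat.nth_count hi.2)).symm
    rw [h1, h2]
    exact sum_filter_count_eq hP (fun c => a (Nat.nth P c)) M
  have hSpos_top : Tendsto Spos atTop atTop := by
    apply tendsto_atTop_atTop_of_monotone hSpos_mono
    intro b
    obtain ⟨M, hM⟩ := (hplus.eventually_ge_atTop b).exists
    exact ⟨Nat.count P M, by rwa [hplus_eq] at hM⟩
  -- choose block boundaries
  have hMex : ∀ (k : ℕ) (prev : ℕ), ∃ M, prev < M ∧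
      (((k + 1 : ℕ) : ℝ) + ∑ j ∈ Finset.range (k+1), |a (Nat.nth Nn j)|) ≤ Spos M := by
    intro k prev
    obtain ⟨M, hM1, hM2⟩ :=
      ((hSpos_top.eventually_ge_atTop (((k + 1 : ℕ) : ℝ) + ∑ j ∈ Finset.range (k+1),
        |a (Nat.nth Nn j)|)).and (eventually_gt_atTop prev)).exists
    exact ⟨M, hM2, hM1⟩
  set m : ℕ → ℕ := fun k => Nat.rec 0 (fun k prev => (hMex k prev).choose) k with hm_def
  have hm_zero : m 0 = 0 := rfl
  have hm_succ : ∀ k, m (k+1) = (hMex k (m k)).choose := fun k => rfl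
  have hm_lt : ∀ k, m k < m (k+1) := by
    intro k; rw [hm_succ]; exact (hMex k (m k)).choose_spec.1
  have hm_ge : ∀ k, (((k + 1 : ℕ) : ℝ) + ∑ j ∈ Finset.range (k+1), |a (Nat.nth Nn j)|)
      ≤ Spos (m (k+1)) := by
    intro k; rw [hm_succ]; exact (hMex k (m k)).choose_spec.2
  have hm_mono : StrictMono m := strictMono_nat_of_lt_succ hm_lt
  set g : ℕ → ℕ := fun k => m (k+1) + k with hg_def
  have hg_mono : StrictMono g := by
    intro i j hij
    have := hm_mono (show i + 1 < j + 1 by omega)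
    simp only [hg_def]
    omega
  set Gp : ℕ → Prop := fun n => ∃ k, g k = n with hGp_def
  have hGp_g : ∀ k, Gp (g k) := fun k => ⟨k, rfl⟩
  -- count of Gp at g k is k
  have hcount_g : ∀ k, Nat.count Gp (g k) = k := by
    intro k
    rw [Nat.count_eq_card_filter_range]
    have : (Finset.range (g k)).filter Gp = (Finset.range k).image g := by
      ext i
      simp only [Finset.mem_filter, Finset.mem_range, Finset.mem_image, hGp_def]
      constructor
      · rintro ⟨hi, j, rfl⟩
        exact ⟨j, hg_mono.lt_iff_lt.mp hi, rfl⟩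
      · rintro ⟨j, hj, rfl⟩
        exact ⟨hg_mono hj, j, rfl⟩
    rw [this, Finset.card_image_of_injective _ hg_mono.injective, Finset.card_range]
  have hnth_g : ∀ k, Nat.nth Gp k = g k := by
    intro k
    conv_lhs => rw [← hcount_g k]
    exact Nat.nth_count (hGp_g k)
  have hGp_inf : (setOf Gp).Infinite := by
    have : setOf Gp = Set.range g := by ext n; simp [hGp_def, Set.mem_range]; exact Iff.rfl
    rw [this]
    exact Set.infinite_range_of_injective hg_mono.injective
  have hnotGp_inf : (setOf (fun i => ¬ Gp i)).Infinite := by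
    apply Set.infinite_of_forall_exists_gt
    intro b
    refine ⟨g b + 1, ?_, ?_⟩
    · simp only [Set.mem_setOf_eq, hGp_def]
      rintro ⟨j, hj⟩
      rcases lt_trichotomy j b with h | h | h
      · have := hg_mono h; omega
      · subst h; omega
      · have h1 := hg_mono h
        have h2 : g (b+1) ≤ g j := hg_mono.monotone h
        have h3 := hm_lt (b+1)
        simp only [hg_def] at hj h2 ⊢
        omega
    · have : b ≤ g b := by
        have := hm_mono.le_apply (x := b + 1)
        simp only [hg_def]
        omega
      omega
  -- the permutation
  set σfun : ℕ → ℕ := fun n => if Gp n then Nat.nth Nn (Nat.count Gp n)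
      else Nat.nth P (Nat.count (fun i => ¬ Gp i) n) with hσfun_def
  set σinv : ℕ → ℕ := fun x => if a x < 0 then g (Nat.count Nn x)
      else Nat.nth (fun i => ¬ Gp i) (Nat.count P x) with hσinv_def
  have hleft : Function.LeftInverse σinv σfun := by
    intro n
    by_cases h : Gp n
    · obtain ⟨k, rfl⟩ := h
      have h1 : σfun (g k) = Nat.nth Nn k := by
        rw [hσfun_def]; simp only [if_pos (hGp_g k), hcount_g k]
      have h2 : a (Nat.nth Nn k) < 0 := Nat.nth_mem_of_infinite hN k
      rw [h1, hσinv_def]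
      simp only [if_pos h2, Nat.count_nth_of_infinite hN]
    · have h1 : σfun n = Nat.nth P (Nat.count (fun i => ¬ Gp i) n) := by
        rw [hσfun_def]; simp only [if_neg h]
      have h2 : P (Nat.nth P (Nat.count (fun i => ¬ Gp i) n)) :=
        Nat.nth_mem_of_infinite hP _
      have h3 : ¬ (a (Nat.nth P (Nat.count (fun i => ¬ Gp i) n)) < 0) := not_lt.mpr h2
      rw [h1, hσinv_def]
      simp only [if_neg h3, Nat.count_nth_of_infinite hP]
      exact Nat.nth_count h
  have hright : Function.RightInverse σinv σfun := by
    intro x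
    by_cases h : a x < 0
    · have h1 : σinv x = g (Nat.count Nn x) := by rw [hσinv_def]; simp only [if_pos h]
      rw [h1, hσfun_def]
      simp only [if_pos (hGp_g _), hcount_g]
      exact Nat.nth_count h
    · have h1 : σinv x = Nat.nth (fun i => ¬ Gp i) (Nat.count P x) := by
        rw [hσinv_def]; simp only [if_neg h]
      have h2 : ¬ Gp (Nat.nth (fun i => ¬ Gp i) (Nat.count P x)) :=
        Nat.nth_mem_of_infinite hnotGp_inf _
      rw [h1, hσfun_def]
      simp only [if_neg h2, Nat.count_nth_of_infinite hnotGp_inf]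
      exact Nat.nth_count (not_lt.mp h)
  set σ : Equiv.Perm ℕ := ⟨σfun, σinv, hleft, hright⟩ with hσ_def
  refine ⟨σ, ?_⟩
  have hcoe : ∀ i, σ i = σfun i := fun i => rfl
  -- compute partial sums
  have hsum_eq : ∀ n, ∑ i ∈ Finset.range n, a (σ i)
      = (∑ j ∈ Finset.range (Nat.count Gp n), a (Nat.nth Nn j))
        + Spos (Nat.count (fun i => ¬ Gp i) n) := by
    intro n
    rw [← Finset.sum_filter_add_sum_filter_not (Finset.range n) Gp]
    congr 1
    · have h1 : ∀ i ∈ (Finset.range n).filter Gp,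
          a (σ i) = (fun c => a (Nat.nth Nn c)) (Nat.count Gp i) := by
        intro i hi
        simp only [Finset.mem_filter] at hi
        rw [hcoe, hσfun_def]
        simp only [if_pos hi.2]
      rw [Finset.sum_congr rfl h1]
      exact sum_filter_count_eq hGp_inf (fun c => a (Nat.nth Nn c)) n
    · have h1 : ∀ i ∈ (Finset.range n).filter (fun i => ¬ Gp i),
          a (σ i) = (fun c => a (Nat.nth P c)) (Nat.count (fun i => ¬ Gp i) i) := by
        intro i hi
        simp only [Finset.mem_filter] at hi
        rw [hcoe, hσfun_def]
        simp only [if_neg hi.2]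
      rw [Finset.sum_congr rfl h1]
      exact sum_filter_count_eq hnotGp_inf (fun c => a (Nat.nth P c)) n
  -- the key lower bound
  have hbound : ∀ n, g 0 < n → (Nat.count Gp n : ℝ) ≤ ∑ i ∈ Finset.range n, a (σ i) := by
    intro n hn
    set c := Nat.count Gp n with hc_def
    have hc1 : 1 ≤ c := by
      have := Nat.count_strict_mono (hGp_g 0) hn
      rw [hcount_g 0] at this
      omega
    obtain ⟨k, hk⟩ : ∃ k, c = k + 1 := ⟨c - 1, by omega⟩
    have hgk : g k < n := by
      have : Nat.nth Gp k < n := Nat.nth_lt_of_lt_count (by omega)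
      rwa [hnth_g] at this
    have hcount_not : Nat.count (fun i => ¬ Gp i) n = n - c := by
      have := count_add_count_not Gp n
      omega
    have hnc : m (k+1) ≤ n - c := by
      simp only [hg_def] at hgk
      omega
    have hSp : Spos (m (k+1)) ≤ Spos (n - c) := hSpos_mono hnc
    have hneg : ∑ j ∈ Finset.range c, a (Nat.nth Nn j)
        = -(∑ j ∈ Finset.range c, |a (Nat.nth Nn j)|) := by
      rw [← Finset.sum_neg_distrib]
      refine Finset.sum_congr rfl (fun j _ => ?_)
      have : a (Nat.nth Nn j) < 0 := Nat.nth_mem_of_infinite hN j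
      rw [abs_of_neg this]; ring
    rw [hsum_eq n, hcount_not, hneg]
    have hkey := hm_ge k
    rw [← hk] at hkey hSp
    linarith
  -- conclude
  have hcount_top : Tendsto (fun n => (Nat.count Gp n : ℝ)) atTop atTop := by
    have h1 : Tendsto (Nat.count Gp) atTop atTop := by
      apply tendsto_atTop_atTop_of_monotone (Nat.count_monotone Gp)
      intro b
      exact ⟨g b, (hcount_g b).ge⟩
    exact tendsto_natCast_atTop_atTop.comp h1
  apply tendsto_atTop_mono' atTop _ hcount_top
  filter_upwards [eventually_gt_atTop (g 0)] with n hn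
  exact hbound n hn

/-- Classically, a series is permutably convergent iff it is weak-permutably convergent. -/
theorem perm_iff_weakPerm (a : ℕ → ℝ) :
    (∀ σ : Equiv.Perm ℕ, ∃ l, SeriesConvTo (fun n => a (σ n)) l) ↔
      ((∃ s, SeriesConvTo a s) ∧
        ∀ σ : Equiv.Perm ℕ, ∃ f : ℕ → ℕ, ∃ t : ℝ, BracketConvTo (fun n => a (σ n)) f t) := by
  constructor
  · intro h
    constructor
    · obtain ⟨l, hl⟩ := h 1
      exact ⟨l, by simpa [SeriesConvTo] using hl⟩
    · intro σ
      obtain ⟨l, hl⟩ := h σ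
      exact ⟨id, l, strictMono_id, rfl, by simpa [SeriesConvTo] using hl⟩
  · rintro ⟨hconv, hbr⟩
    have hcontra : ∀ b : ℕ → ℝ,
        (∀ σ : Equiv.Perm ℕ, ∃ f t, BracketConvTo (fun n => b (σ n)) f t) →
        ∀ σ : Equiv.Perm ℕ,
          ¬ Tendsto (fun n => ∑ i ∈ Finset.range n, b (σ i)) atTop atTop := by
      intro b hb σ htop
      obtain ⟨f, t, hf_mono, _, hf⟩ := hb σ
      have h1 : Tendsto f atTop atTop := hf_mono.tendsto_atTop
      have h2 : Tendsto (fun K => ∑ i ∈ Finset.range (f K), b (σ i)) atTop atTop :=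
        htop.comp h1
      exact not_tendsto_nhds_of_tendsto_atTop h2 t hf
    have h1 : Summable (fun n => max (a n) 0) := by
      by_contra h
      obtain ⟨σ, hσ⟩ := key_perm a hconv h
      exact hcontra a hbr σ hσ
    have h2 : Summable (fun n => max (-a n) 0) := by
      by_contra h
      have hconv' : ∃ s, SeriesConvTo (fun n => -a n) s := by
        obtain ⟨s, hs⟩ := hconv
        refine ⟨-s, ?_⟩
        have := hs.neg
        simpa [SeriesConvTo] using this
      have hbr' : ∀ σ : Equiv.Perm ℕ, ∃ f t,
          BracketConvTo (fun n => (fun n => -a n) (σ n)) f t := by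
        intro σ
        obtain ⟨f, t, hm, h0, ht⟩ := hbr σ
        refine ⟨f, -t, hm, h0, ?_⟩
        have := ht.neg
        simpa using this
      obtain ⟨σ, hσ⟩ := key_perm (fun n => -a n) hconv' h
      exact hcontra (fun n => -a n) hbr' σ hσ
    have hsum : Summable a := by
      have := h1.sub h2
      simpa [max_zero_sub_max_neg_zero_eq_self] using this
    intro σ
    have : Summable (fun n => a (σ n)) := σ.summable_iff.mpr hsum
    exact ⟨_, this.hasSum.tendsto_sum_nat⟩
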